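/- (1) There is a formula that is (n+1)-step inductive for every n ∈ ℕ but is not p-inductive. (2) For every n ∈ ℕ, there is a p-inductive formula that is not (n+1)-inductive. -/

import Mathlib

open FirstOrder Language

/-! ### The language `L_OR = {0, 1, +, ×, <}` of ordered rings -/

/-- Function symbols of the language of ordered rings. -/
inductive LorFunc : ℕ → Type
  | zero : LorFunc 0
  | one : LorFunc 0
  | add : LorFunc 2
  | mul : LorFunc 2

/-- Relation symbols of the language of ordered rings: just `<`. -/
inductive LorRel : ℕ → Type
  | lt : LorRel 2

/-- The first-order language of ordered rings. -/
def Lor : Language := ⟨LorFunc, LorRel⟩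

/-- The term `0`. -/
def zeroT {α : Type} : Lor.Term α := Constants.term LorFunc.zero

/-- The term `1`. -/
def oneT {α : Type} : Lor.Term α := Constants.term LorFunc.one

/-- Addition of terms. -/
def addT {α : Type} (t u : Lor.Term α) : Lor.Term α := Functions.apply₂ LorFunc.add t u

/-- Multiplication of terms. -/
def mulT {α : Type} (t u : Lor.Term α) : Lor.Term α := Functions.apply₂ LorFunc.mul t u

/-- The term `2`, an abbreviation for `1 + 1`. -/
def twoT {α : Type} : Lor.Term α := addT oneT oneT

/-- The numeral `k`, i.e. the closed term `(⋯((0+1)+1)+⋯+1)` with `k` ones. -/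
def numT {α : Type} : ℕ → Lor.Term α
  | 0 => zeroT
  | n + 1 => addT (numT n) oneT

/-- The bounded formula `t < u`. -/
def ltBF {α : Type} {n : ℕ} (t u : Lor.Term (α ⊕ Fin n)) : Lor.BoundedFormula α n :=
  Relations.boundedFormula₂ LorRel.lt t u

/-- The formula `t < u`. -/
def ltFml {α : Type} (t u : Lor.Term α) : Lor.Formula α :=
  Relations.formula₂ LorRel.lt t u

/-- The formula `t ≤ u`, an abbreviation for `t < u ∨ t = u`. -/
def leFml {α : Type} (t u : Lor.Term α) : Lor.Formula α :=
  ltFml t u ⊔ Term.equal t u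

/-! ### The base theory `PA⁻` -/

/-- `PA⁻`, the theory of non-negative parts of discretely ordered rings. -/
def PAminus : Lor.Theory :=
  { -- (P1) associativity of +
    ∀' ∀' ∀' (addT (addT &0 &1) &2 =' addT &0 (addT &1 &2)),
    -- (P2) commutativity of +
    ∀' ∀' (addT &0 &1 =' addT &1 &0),
    -- (P3) associativity of ×
    ∀' ∀' ∀' (mulT (mulT &0 &1) &2 =' mulT &0 (mulT &1 &2)),
    -- (P4) commutativity of ×
    ∀' ∀' (mulT &0 &1 =' mulT &1 &0),
    -- (P5) distributivity
    ∀' ∀' ∀' (mulT &0 (addT &1 &2) =' addT (mulT &0 &1) (mulT &0 &2)),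
    -- (P6) x + 0 = x
    ∀' (addT &0 zeroT =' &0),
    -- (P7) x × 0 = 0
    ∀' (mulT &0 zeroT =' zeroT),
    -- (P8) x × 1 = x
    ∀' (mulT &0 oneT =' &0),
    -- (P9) transitivity of <
    ∀' ∀' ∀' (ltBF &0 &1 ⊓ ltBF &1 &2 ⟹ ltBF &0 &2),
    -- (P10) irreflexivity of <
    ∀' ∼(ltBF &0 &0),
    -- (P11) linearity of <
    ∀' ∀' (ltBF &0 &1 ⊔ &0 =' &1 ⊔ ltBF &1 &0),
    -- (P12) x < y → x + z < y + z
    ∀' ∀' ∀' (ltBF &0 &1 ⟹ ltBF (addT &0 &2) (addT &1 &2)),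
    -- (P13) z ≠ 0 ∧ x < y → x × z < y × z
    ∀' ∀' ∀' (∼(&2 =' zeroT) ⊓ ltBF &0 &1 ⟹ ltBF (mulT &0 &2) (mulT &1 &2)),
    -- (P14) x < y ↔ ∃z ((x + z) + 1 = y)
    ∀' ∀' (ltBF &0 &1 ⇔ ∃' (addT (addT &0 &2) oneT =' &1)),
    -- (P15) 0 < 1 ∧ (x > 0 → x ≥ 1)
    ltBF zeroT oneT ⊓ ∀' (ltBF zeroT &0 ⟹ ltBF oneT &0 ⊔ oneT =' &0),
    -- (P16) x ≥ 0
    ∀' (ltBF zeroT &0 ⊔ zeroT =' &0) }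

/-! ### Formulas `θ(x, z̄)` with a distinguished variable `x` and parameters `z̄`

A formula `θ(x, z̄)` with `m` parameters `z̄` and a distinguished induction
variable `x` is represented as `θ : Lor.Formula (Fin m ⊕ Fin 1)`, where the
`Fin m` component gives the parameters and the `Fin 1` component gives `x`. -/

/-- The distinguished variable `x` as a term. -/
def xT {m : ℕ} : Lor.Term (Fin m ⊕ Fin 1) := Term.var (Sum.inr 0)

/-- `θ(t, z̄)`, where `t` is a term possibly involving `x` and the parameters. -/
def substX {m : ℕ} (θ : Lor.Formula (Fin m ⊕ Fin 1)) (t : Lor.Term (Fin m ⊕ Fin 1)) :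
    Lor.Formula (Fin m ⊕ Fin 1) :=
  θ.subst (Sum.elim (fun i => Term.var (Sum.inl i)) fun _ => t)

/-- `θ(t, z̄)` where `t` is a term in the parameters only. -/
def substP {m : ℕ} (θ : Lor.Formula (Fin m ⊕ Fin 1)) (t : Lor.Term (Fin m)) :
    Lor.Formula (Fin m) :=
  θ.subst (Sum.elim (fun i => Term.var i) fun _ => t)

/-- `∀x θ(x, z̄)`. -/
noncomputable def allX {m : ℕ} (θ : Lor.Formula (Fin m ⊕ Fin 1)) : Lor.Formula (Fin m) :=
  Formula.iAlls (Fin 1) θ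

/-- The universal closure of a formula, as a sentence. -/
noncomputable def closeAll {α : Type} [Finite α] (φ : Lor.Formula α) : Lor.Sentence :=
  Formula.iAlls α (φ.relabel (Sum.inr : α → Empty ⊕ α))

/-- `∀x' < x, θ(x', z̄)`, a formula with free variable `x` (and parameters). -/
noncomputable def allLtX {m : ℕ} (θ : Lor.Formula (Fin m ⊕ Fin 1)) :
    Lor.Formula (Fin m ⊕ Fin 1) :=
  Formula.iAlls (Fin 1)
    (ltFml (Term.var (Sum.inr 0)) (Term.var (Sum.inl (Sum.inr 0))) ⟹
      θ.relabel (Sum.elim (fun i => Sum.inl (Sum.inl i)) fun _ => Sum.inr 0))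

/-- `∀x' ≤ x, θ(x', z̄)`, a formula with free variable `x` (and parameters). -/
noncomputable def allLeX {m : ℕ} (θ : Lor.Formula (Fin m ⊕ Fin 1)) :
    Lor.Formula (Fin m ⊕ Fin 1) :=
  Formula.iAlls (Fin 1)
    (leFml (Term.var (Sum.inr 0)) (Term.var (Sum.inl (Sum.inr 0))) ⟹
      θ.relabel (Sum.elim (fun i => Sum.inl (Sum.inl i)) fun _ => Sum.inr 0))

/-- The conjunction `⋀_{k<j} θ(k, z̄)`. -/
def conjNum {m : ℕ} (θ : Lor.Formula (Fin m ⊕ Fin 1)) : ℕ → Lor.Formula (Fin m)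
  | 0 => ⊤
  | j + 1 => conjNum θ j ⊓ substP θ (numT j)

/-- The conjunction `⋀_{k<j} θ(x+k, z̄)`. -/
def conjShift {m : ℕ} (θ : Lor.Formula (Fin m ⊕ Fin 1)) : ℕ → Lor.Formula (Fin m ⊕ Fin 1)
  | 0 => ⊤
  | j + 1 => conjShift θ j ⊓ substX θ (addT xT (numT j))

/-! ### Induction axioms -/

/-- The induction axiom `I_x θ`:
`∀z̄( θ(0,z̄) ∧ ∀x(θ(x,z̄) → θ(x+1,z̄)) → ∀x θ(x,z̄) )`. -/
noncomputable def indAx {m : ℕ} (θ : Lor.Formula (Fin m ⊕ Fin 1)) : Lor.Sentence :=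
  closeAll ((substP θ zeroT ⊓ allX (θ ⟹ substX θ (addT xT oneT))) ⟹ allX θ)

/-- The `<`-induction axiom `I^<_x θ`:
`∀z̄( ∀y(∀x<y θ(x,z̄) → θ(y,z̄)) → ∀x θ(x,z̄) )`. -/
noncomputable def indLtAx {m : ℕ} (θ : Lor.Formula (Fin m ⊕ Fin 1)) : Lor.Sentence :=
  closeAll (allX (allLtX θ ⟹ θ) ⟹ allX θ)

/-- The `(n+1)`-step induction axiom `I^{(n+1)-step}_x θ`:
`∀z̄( ⋀_{k<n+1} θ(k,z̄) ∧ ∀x(θ(x,z̄) → θ(x+n+1,z̄)) → ∀x θ(x,z̄) )`. -/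
noncomputable def indStepAx {m : ℕ} (n : ℕ) (θ : Lor.Formula (Fin m ⊕ Fin 1)) : Lor.Sentence :=
  closeAll ((conjNum θ (n + 1) ⊓ allX (θ ⟹ substX θ (addT xT (numT (n + 1))))) ⟹ allX θ)

/-- The `(n+1)`-induction axiom `I^{n+1}_x θ`:
`∀z̄( ⋀_{k<n+1} θ(k,z̄) ∧ ∀x(⋀_{k<n+1} θ(x+k,z̄) → θ(x+n+1,z̄)) → ∀x θ(x,z̄) )`. -/
noncomputable def indKAx {m : ℕ} (n : ℕ) (θ : Lor.Formula (Fin m ⊕ Fin 1)) : Lor.Sentence :=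
  closeAll ((conjNum θ (n + 1) ⊓ allX (conjShift θ (n + 1) ⟹ substX θ (addT xT (numT (n + 1))))) ⟹
    allX θ)

/-- The polynomial induction axiom `I^p_x θ`:
`∀z̄( θ(0,z̄) ∧ ∀x(θ(x,z̄) → θ(2x,z̄) ∧ θ(2x+1,z̄)) → ∀x θ(x,z̄) )`, where `2x` is `(1+1)×x`. -/
noncomputable def indPAx {m : ℕ} (θ : Lor.Formula (Fin m ⊕ Fin 1)) : Lor.Sentence :=
  closeAll ((substP θ zeroT ⊓
      allX (θ ⟹ substX θ (mulT twoT xT) ⊓ substX θ (addT (mulT twoT xT) oneT))) ⟹ allX θ)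

/-! ### Theories -/

/-- Peano arithmetic: `PA⁻` plus induction for all `L_OR` formulas. -/
noncomputable def PA : Lor.Theory :=
  PAminus ∪ {σ | ∃ (m : ℕ) (θ : Lor.Formula (Fin m ⊕ Fin 1)), σ = indAx θ}

/-- `IOpen`: `PA⁻` plus induction for all quantifier-free `L_OR` formulas. -/
noncomputable def IOpen : Lor.Theory :=
  PAminus ∪ {σ | ∃ (m : ℕ) (θ : Lor.Formula (Fin m ⊕ Fin 1)), θ.IsQF ∧ σ = indAx θ}

/-! ### Notions of inductiveness

A formula `φ(x)` with exactly one free variable `x` is represented as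
`φ : Lor.Formula (Fin 0 ⊕ Fin 1)` (no parameters). -/

/-- Formulas `φ(x)` with exactly one free variable `x`. -/
abbrev OneVarFormula : Type := Lor.Formula (Fin 0 ⊕ Fin 1)

/-- The sentence `∀x φ(x)`. -/
noncomputable def allS (φ : OneVarFormula) : Lor.Sentence := closeAll (allX φ)

/-- `φ(x)` is inductive: `PA⁻ ⊢ φ(0)` and `PA⁻ ⊢ ∀x(φ(x) → φ(x+1))`. -/
noncomputable def IsInductive (φ : OneVarFormula) : Prop :=
  PAminus ⊨ᵇ closeAll (substP φ zeroT) ∧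
    PAminus ⊨ᵇ closeAll (allX (φ ⟹ substX φ (addT xT oneT)))

/-- `φ(x)` is `<`-inductive: `PA⁻ ⊢ ∀y(∀x<y φ(x) → φ(y))`. -/
noncomputable def IsLtInductive (φ : OneVarFormula) : Prop :=
  PAminus ⊨ᵇ closeAll (allX (allLtX φ ⟹ φ))

/-- `φ(x)` is `(n+1)`-step inductive:
`PA⁻ ⊢ ⋀_{k<n+1} φ(k) ∧ ∀x(φ(x) → φ(x+n+1))`. -/
noncomputable def IsStepInductive (n : ℕ) (φ : OneVarFormula) : Prop :=
  PAminus ⊨ᵇ closeAll (conjNum φ (n + 1) ⊓ allX (φ ⟹ substX φ (addT xT (numT (n + 1)))))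

/-- `φ(x)` is `(n+1)`-inductive:
`PA⁻ ⊢ ⋀_{k<n+1} φ(k) ∧ ∀x(⋀_{k<n+1} φ(x+k) → φ(x+n+1))`. -/
noncomputable def IsKInductive (n : ℕ) (φ : OneVarFormula) : Prop :=
  PAminus ⊨ᵇ
    closeAll (conjNum φ (n + 1) ⊓ allX (conjShift φ (n + 1) ⟹ substX φ (addT xT (numT (n + 1)))))

/-- `φ(x)` is p-inductive (polynomially inductive):
`PA⁻ ⊢ φ(0) ∧ ∀x(φ(x) → φ(2x) ∧ φ(2x+1))`. -/
noncomputable def IsPInductive (φ : OneVarFormula) : Prop :=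
  PAminus ⊨ᵇ closeAll (substP φ zeroT ⊓
    allX (φ ⟹ substX φ (mulT twoT xT) ⊓ substX φ (addT (mulT twoT xT) oneT)))

/-! ### Cuts -/

/-- `φ(x)` is a cut: an inductive formula with `PA⁻ ⊢ ∀x∀y(x<y ∧ φ(y) → φ(x))`. -/
noncomputable def IsCut (φ : OneVarFormula) : Prop :=
  IsInductive φ ∧
    PAminus ⊨ᵇ closeAll
      (ltFml (Term.var (Sum.inr 0) : Lor.Term (Fin 0 ⊕ Fin 2)) (Term.var (Sum.inr 1)) ⊓
          φ.relabel (Sum.elim (fun i => Sum.inl i) fun _ => Sum.inr 1) ⟹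
        φ.relabel (Sum.elim (fun i => Sum.inl i) fun _ => Sum.inr 0))

/-- `φ(x)` is an a-cut: a cut with `PA⁻ ⊢ ∀x(φ(x) → φ(x+x))`. -/
noncomputable def IsACut (φ : OneVarFormula) : Prop :=
  IsCut φ ∧ PAminus ⊨ᵇ closeAll (allX (φ ⟹ substX φ (addT xT xT)))

/-- `φ(x)` is an am-cut: an a-cut with `PA⁻ ⊢ ∀x(φ(x) → φ(x×x))`. -/
noncomputable def IsAMCut (φ : OneVarFormula) : Prop :=
  IsACut φ ∧ PAminus ⊨ᵇ closeAll (allX (φ ⟹ substX φ (mulT xT xT)))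
/-! ### Auxiliary development -/

section Ops
variable {M : Type} [Lor.Structure M]

instance lorZero : Zero M := ⟨Structure.funMap (L := Lor) LorFunc.zero finZeroElim⟩
instance lorOne : One M := ⟨Structure.funMap (L := Lor) LorFunc.one finZeroElim⟩
instance lorAdd : Add M := ⟨fun a b => Structure.funMap (L := Lor) LorFunc.add ![a, b]⟩
instance lorMul : Mul M := ⟨fun a b => Structure.funMap (L := Lor) LorFunc.mul ![a, b]⟩
instance lorLT : LT M := ⟨fun a b => Structure.RelMap (L := Lor) LorRel.lt ![a, b]⟩
instance lorLE : LE M := ⟨fun a b => a < b ∨ a = b⟩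
noncomputable instance lorNatCast : NatCast M := ⟨fun k => Nat.rec (0 : M) (fun _ ih => ih + 1) k⟩

lemma funMap_zero (f : Fin 0 → M) : Structure.funMap (L := Lor) LorFunc.zero f = 0 := by
  show _ = Structure.funMap (L := Lor) LorFunc.zero finZeroElim; congr!
lemma funMap_one (f : Fin 0 → M) : Structure.funMap (L := Lor) LorFunc.one f = 1 := by
  show _ = Structure.funMap (L := Lor) LorFunc.one finZeroElim; congr!
lemma funMap_add (f : Fin 2 → M) : Structure.funMap (L := Lor) LorFunc.add f = f 0 + f 1 := by
  show _ = Structure.funMap (L := Lor) LorFunc.add ![f 0, f 1]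
  congr!; funext i; fin_cases i <;> rfl
lemma funMap_mul (f : Fin 2 → M) : Structure.funMap (L := Lor) LorFunc.mul f = f 0 * f 1 := by
  show _ = Structure.funMap (L := Lor) LorFunc.mul ![f 0, f 1]
  congr!; funext i; fin_cases i <;> rfl
lemma relMap_lt (f : Fin 2 → M) : Structure.RelMap (L := Lor) LorRel.lt f = (f 0 < f 1) := by
  show _ = Structure.RelMap (L := Lor) LorRel.lt ![f 0, f 1]
  congr!; funext i; fin_cases i <;> rfl

@[simp] lemma realize_zeroT {α : Type} (v : α → M) : (zeroT (α := α)).realize v = 0 := by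
  simp [zeroT, Constants.term, Term.realize, funMap_zero]
@[simp] lemma realize_oneT {α : Type} (v : α → M) : (oneT (α := α)).realize v = 1 := by
  simp [oneT, Constants.term, Term.realize, funMap_one]
@[simp] lemma realize_addT {α : Type} (v : α → M) (t u : Lor.Term α) :
    (addT t u).realize v = t.realize v + u.realize v := by
  simp [addT, Functions.apply₂, Term.realize, funMap_add]
@[simp] lemma realize_mulT {α : Type} (v : α → M) (t u : Lor.Term α) :
    (mulT t u).realize v = t.realize v * u.realize v := by
  simp [mulT, Functions.apply₂, Term.realize, funMap_mul]
@[simp] lemma realize_twoT {α : Type} (v : α → M) : (twoT (α := α)).realize v = 1 + 1 := by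
  simp [twoT]
@[simp] lemma realize_numT {α : Type} (v : α → M) (k : ℕ) :
    (numT (α := α) k).realize v = (k : M) := by
  induction k with
  | zero => rw [numT, realize_zeroT]; rfl
  | succ k ih => rw [numT, realize_addT, ih, realize_oneT]; rfl
@[simp] lemma realize_ltBF {α : Type} {n : ℕ} (v : α → M) (xs : Fin n → M)
    (t u : Lor.Term (α ⊕ Fin n)) :
    (ltBF t u).Realize v xs ↔ t.realize (Sum.elim v xs) < u.realize (Sum.elim v xs) := by
  unfold ltBF
  exact (BoundedFormula.realize_rel₂ (L := Lor) (R := LorRel.lt)).trans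
    (by rw [relMap_lt]; simp)
@[simp] lemma realize_ltFml {α : Type} (v : α → M) (t u : Lor.Term α) :
    (ltFml t u).Realize v ↔ t.realize v < u.realize v := by
  unfold ltFml
  exact (Formula.realize_rel₂ (L := Lor) (R := LorRel.lt)).trans
    (by rw [relMap_lt]; simp)

end Ops

section RealizeAPI
variable {M : Type} [Lor.Structure M]

/-- The canonical assignment sending `x` to a value. -/
def asg (x : M) : Fin 0 ⊕ Fin 1 → M := Sum.elim finZeroElim fun _ => x

/-- Semantic evaluation of a one-variable formula. -/
def evalF (θ : Lor.Formula (Fin 0 ⊕ Fin 1)) (x : M) : Prop := θ.Realize (asg x)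

lemma asg_eq (w : Fin 0 ⊕ Fin 1 → M) : w = asg (w (Sum.inr 0)) := by
  funext a
  rcases a with i | i
  · exact i.elim0
  · rw [Fin.fin_one_eq_zero i]; rfl

@[simp] lemma realize_closeAll0 (ψ : Lor.Formula (Fin 0)) (v : Empty → M) :
    Formula.Realize (M := M) (closeAll ψ) v ↔ ψ.Realize (fun i : Fin 0 => i.elim0 : Fin 0 → M) := by
  unfold closeAll
  rw [Formula.realize_iAlls]
  simp only [Formula.realize_relabel]
  constructor
  · intro h
    have := h (fun i : Fin 0 => i.elim0)
    rwa [show ((fun a => Sum.elim v (fun i : Fin 0 => (i.elim0 : M)) a) ∘ Sum.inr)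
        = (fun i : Fin 0 => i.elim0) from funext fun i => i.elim0] at this
  · intro h i
    rwa [show ((fun a => Sum.elim v i a) ∘ Sum.inr) = (fun i : Fin 0 => (i.elim0 : M)) from
      funext fun j => j.elim0]

@[simp] lemma realize_allX0 (θ : Lor.Formula (Fin 0 ⊕ Fin 1)) (v : Fin 0 → M) :
    (allX θ).Realize v ↔ ∀ x : M, evalF θ x := by
  unfold allX
  rw [Formula.realize_iAlls]
  constructor
  · intro h x
    have := h fun _ => x
    rwa [asg_eq (fun a => Sum.elim v (fun _ => x) a)] at this
  · intro h i
    have := h (i 0)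
    rw [evalF] at this
    rwa [asg_eq (fun a => Sum.elim v i a)]

@[simp] lemma realize_substX0 (θ : Lor.Formula (Fin 0 ⊕ Fin 1))
    (t : Lor.Term (Fin 0 ⊕ Fin 1)) (w : Fin 0 ⊕ Fin 1 → M) :
    (substX θ t).Realize w ↔ evalF θ (t.realize w) := by
  rw [substX, Formula.Realize, BoundedFormula.realize_subst]
  rw [show (fun a => Term.realize w (Sum.elim (fun i => var (Sum.inl i))
      (fun _ => t) a)) = asg (t.realize w) from asg_eq _]
  exact Iff.rfl

@[simp] lemma realize_substP0 (θ : Lor.Formula (Fin 0 ⊕ Fin 1))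
    (t : Lor.Term (Fin 0)) (w : Fin 0 → M) :
    (substP θ t).Realize w ↔ evalF θ (t.realize w) := by
  rw [substP, Formula.Realize, BoundedFormula.realize_subst]
  rw [show (fun a => Term.realize w (Sum.elim (fun i => var i)
      (fun _ => t) a)) = asg (t.realize w) from asg_eq _]
  exact Iff.rfl

@[simp] lemma asg_apply (x : M) (i : Fin 1) : asg x (Sum.inr i) = x := rfl

@[simp] lemma realize_xT (w : Fin 0 ⊕ Fin 1 → M) :
    (xT (m := 0)).realize w = w (Sum.inr 0) := rfl

@[simp] lemma evalF_numT (θ : Lor.Formula (Fin 0 ⊕ Fin 1)) (k : ℕ) (w : Fin 0 → M) :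
    (substP θ (numT k)).Realize w ↔ evalF θ (k : M) := by
  rw [realize_substP0, realize_numT]

lemma realize_conjNum (θ : Lor.Formula (Fin 0 ⊕ Fin 1)) (j : ℕ) (w : Fin 0 → M) :
    (conjNum θ j).Realize w ↔ ∀ k < j, evalF θ (k : M) := by
  induction j with
  | zero => simp [conjNum]
  | succ j ih =>
    rw [conjNum]
    simp only [Formula.realize_inf, ih, evalF_numT]
    constructor
    · rintro ⟨h1, h2⟩ k hk
      rcases Nat.lt_succ_iff_lt_or_eq.1 hk with h | rfl
      · exact h1 k h
      · exact h2
    · intro h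
      exact ⟨fun k hk => h k (Nat.lt_succ_of_lt hk), h j (Nat.lt_succ_self j)⟩

lemma realize_conjShift (θ : Lor.Formula (Fin 0 ⊕ Fin 1)) (j : ℕ) (w : Fin 0 ⊕ Fin 1 → M) :
    (conjShift θ j).Realize w ↔ ∀ k < j, evalF θ (w (Sum.inr 0) + (k : M)) := by
  induction j with
  | zero => simp [conjShift]
  | succ j ih =>
    rw [conjShift]
    simp only [Formula.realize_inf, ih, realize_substX0, realize_addT, realize_numT, realize_xT]
    constructor
    · rintro ⟨h1, h2⟩ k hk
      rcases Nat.lt_succ_iff_lt_or_eq.1 hk with h | rfl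
      · exact h1 k h
      · exact h2
    · intro h
      exact ⟨fun k hk => h k (Nat.lt_succ_of_lt hk), h j (Nat.lt_succ_self j)⟩

end RealizeAPI

section Axioms
variable (M : Type) [Lor.Structure M] [PAminus.Model M]

lemma pa_add_assoc : ∀ a b c : M, a + b + c = a + (b + c) := by
  have h : M ⊨ (∀' ∀' ∀' (addT (addT &0 &1) &2 =' addT &0 (addT &1 &2)) : Lor.Sentence) :=
    Theory.realize_sentence_of_mem PAminus (Set.mem_insert _ _)
  intro a b c
  have h2 := h a b c
  simp only [Sentence.Realize, Formula.Realize, BoundedFormula.realize_all,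
    BoundedFormula.realize_imp, BoundedFormula.realize_inf, BoundedFormula.realize_sup,
    BoundedFormula.realize_not, BoundedFormula.realize_iff, BoundedFormula.realize_ex,
    BoundedFormula.realize_bdEqual, realize_ltBF, realize_addT, realize_mulT, realize_zeroT,
    realize_oneT, Term.realize_var, Sum.elim_inr, Fin.snoc, Fin.cases] at h2
  simpa [Fin.snoc] using h2

lemma pa_add_comm : ∀ a b : M, a + b = b + a := by
  have h : M ⊨ (∀' ∀' (addT &0 &1 =' addT &1 &0) : Lor.Sentence) :=
    Theory.realize_sentence_of_mem PAminus (Set.mem_insert_of_mem _ (Set.mem_insert _ _))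
  intro a b
  have h2 := h a b
  simp only [Sentence.Realize, Formula.Realize, BoundedFormula.realize_all,
    BoundedFormula.realize_imp, BoundedFormula.realize_inf, BoundedFormula.realize_sup,
    BoundedFormula.realize_not, BoundedFormula.realize_iff, BoundedFormula.realize_ex,
    BoundedFormula.realize_bdEqual, realize_ltBF, realize_addT, realize_mulT, realize_zeroT,
    realize_oneT, Term.realize_var, Sum.elim_inr, Fin.snoc, Fin.cases] at h2
  simpa [Fin.snoc] using h2

lemma pa_mul_assoc : ∀ a b c : M, a * b * c = a * (b * c) := by
  have h : M ⊨ (∀' ∀' ∀' (mulT (mulT &0 &1) &2 =' mulT &0 (mulT &1 &2)) : Lor.Sentence) :=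
    Theory.realize_sentence_of_mem PAminus (Set.mem_insert_of_mem _ (Set.mem_insert_of_mem _ (Set.mem_insert _ _)))
  intro a b c
  have h2 := h a b c
  simp only [Sentence.Realize, Formula.Realize, BoundedFormula.realize_all,
    BoundedFormula.realize_imp, BoundedFormula.realize_inf, BoundedFormula.realize_sup,
    BoundedFormula.realize_not, BoundedFormula.realize_iff, BoundedFormula.realize_ex,
    BoundedFormula.realize_bdEqual, realize_ltBF, realize_addT, realize_mulT, realize_zeroT,
    realize_oneT, Term.realize_var, Sum.elim_inr, Fin.snoc, Fin.cases] at h2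
  simpa [Fin.snoc] using h2

lemma pa_mul_comm : ∀ a b : M, a * b = b * a := by
  have h : M ⊨ (∀' ∀' (mulT &0 &1 =' mulT &1 &0) : Lor.Sentence) :=
    Theory.realize_sentence_of_mem PAminus (Set.mem_insert_of_mem _ (Set.mem_insert_of_mem _ (Set.mem_insert_of_mem _ (Set.mem_insert _ _))))
  intro a b
  have h2 := h a b
  simp only [Sentence.Realize, Formula.Realize, BoundedFormula.realize_all,
    BoundedFormula.realize_imp, BoundedFormula.realize_inf, BoundedFormula.realize_sup,
    BoundedFormula.realize_not, BoundedFormula.realize_iff, BoundedFormula.realize_ex,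
    BoundedFormula.realize_bdEqual, realize_ltBF, realize_addT, realize_mulT, realize_zeroT,
    realize_oneT, Term.realize_var, Sum.elim_inr, Fin.snoc, Fin.cases] at h2
  simpa [Fin.snoc] using h2

lemma pa_left_distrib : ∀ a b c : M, a * (b + c) = a * b + a * c := by
  have h : M ⊨ (∀' ∀' ∀' (mulT &0 (addT &1 &2) =' addT (mulT &0 &1) (mulT &0 &2)) : Lor.Sentence) :=
    Theory.realize_sentence_of_mem PAminus (Set.mem_insert_of_mem _ (Set.mem_insert_of_mem _ (Set.mem_insert_of_mem _ (Set.mem_insert_of_mem _ (Set.mem_insert _ _)))))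
  intro a b c
  have h2 := h a b c
  simp only [Sentence.Realize, Formula.Realize, BoundedFormula.realize_all,
    BoundedFormula.realize_imp, BoundedFormula.realize_inf, BoundedFormula.realize_sup,
    BoundedFormula.realize_not, BoundedFormula.realize_iff, BoundedFormula.realize_ex,
    BoundedFormula.realize_bdEqual, realize_ltBF, realize_addT, realize_mulT, realize_zeroT,
    realize_oneT, Term.realize_var, Sum.elim_inr, Fin.snoc, Fin.cases] at h2
  simpa [Fin.snoc] using h2

lemma pa_add_zero : ∀ a : M, a + 0 = a := by
  have h : M ⊨ (∀' (addT &0 zeroT =' &0) : Lor.Sentence) :=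
    Theory.realize_sentence_of_mem PAminus (Set.mem_insert_of_mem _ (Set.mem_insert_of_mem _ (Set.mem_insert_of_mem _ (Set.mem_insert_of_mem _ (Set.mem_insert_of_mem _ (Set.mem_insert _ _))))))
  intro a
  have h2 := h a
  simp only [Sentence.Realize, Formula.Realize, BoundedFormula.realize_all,
    BoundedFormula.realize_imp, BoundedFormula.realize_inf, BoundedFormula.realize_sup,
    BoundedFormula.realize_not, BoundedFormula.realize_iff, BoundedFormula.realize_ex,
    BoundedFormula.realize_bdEqual, realize_ltBF, realize_addT, realize_mulT, realize_zeroT,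
    realize_oneT, Term.realize_var, Sum.elim_inr, Fin.snoc, Fin.cases] at h2
  simpa [Fin.snoc] using h2

lemma pa_mul_zero : ∀ a : M, a * 0 = 0 := by
  have h : M ⊨ (∀' (mulT &0 zeroT =' zeroT) : Lor.Sentence) :=
    Theory.realize_sentence_of_mem PAminus (Set.mem_insert_of_mem _ (Set.mem_insert_of_mem _ (Set.mem_insert_of_mem _ (Set.mem_insert_of_mem _ (Set.mem_insert_of_mem _ (Set.mem_insert_of_mem _ (Set.mem_insert _ _)))))))
  intro a
  have h2 := h a
  simp only [Sentence.Realize, Formula.Realize, BoundedFormula.realize_all,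
    BoundedFormula.realize_imp, BoundedFormula.realize_inf, BoundedFormula.realize_sup,
    BoundedFormula.realize_not, BoundedFormula.realize_iff, BoundedFormula.realize_ex,
    BoundedFormula.realize_bdEqual, realize_ltBF, realize_addT, realize_mulT, realize_zeroT,
    realize_oneT, Term.realize_var, Sum.elim_inr, Fin.snoc, Fin.cases] at h2
  simpa [Fin.snoc] using h2

lemma pa_mul_one : ∀ a : M, a * 1 = a := by
  have h : M ⊨ (∀' (mulT &0 oneT =' &0) : Lor.Sentence) :=
    Theory.realize_sentence_of_mem PAminus (Set.mem_insert_of_mem _ (Set.mem_insert_of_mem _ (Set.mem_insert_of_mem _ (Set.mem_insert_of_mem _ (Set.mem_insert_of_mem _ (Set.mem_insert_of_mem _ (Set.mem_insert_of_mem _ (Set.mem_insert _ _))))))))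
  intro a
  have h2 := h a
  simp only [Sentence.Realize, Formula.Realize, BoundedFormula.realize_all,
    BoundedFormula.realize_imp, BoundedFormula.realize_inf, BoundedFormula.realize_sup,
    BoundedFormula.realize_not, BoundedFormula.realize_iff, BoundedFormula.realize_ex,
    BoundedFormula.realize_bdEqual, realize_ltBF, realize_addT, realize_mulT, realize_zeroT,
    realize_oneT, Term.realize_var, Sum.elim_inr, Fin.snoc, Fin.cases] at h2
  simpa [Fin.snoc] using h2

lemma pa_lt_trans : ∀ a b c : M, a < b → b < c → a < c := by
  have h : M ⊨ (∀' ∀' ∀' (ltBF &0 &1 ⊓ ltBF &1 &2 ⟹ ltBF &0 &2) : Lor.Sentence) :=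
    Theory.realize_sentence_of_mem PAminus (Set.mem_insert_of_mem _ (Set.mem_insert_of_mem _ (Set.mem_insert_of_mem _ (Set.mem_insert_of_mem _ (Set.mem_insert_of_mem _ (Set.mem_insert_of_mem _ (Set.mem_insert_of_mem _ (Set.mem_insert_of_mem _ (Set.mem_insert _ _)))))))))
  intro a b c
  have h2 := h a b c
  simp only [Sentence.Realize, Formula.Realize, BoundedFormula.realize_all,
    BoundedFormula.realize_imp, BoundedFormula.realize_inf, BoundedFormula.realize_sup,
    BoundedFormula.realize_not, BoundedFormula.realize_iff, BoundedFormula.realize_ex,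
    BoundedFormula.realize_bdEqual, realize_ltBF, realize_addT, realize_mulT, realize_zeroT,
    realize_oneT, Term.realize_var, Sum.elim_inr, Fin.snoc, Fin.cases] at h2
  simpa [Fin.snoc] using h2

lemma pa_lt_irrefl : ∀ a : M, ¬ a < a := by
  have h : M ⊨ (∀' ∼(ltBF &0 &0) : Lor.Sentence) :=
    Theory.realize_sentence_of_mem PAminus (Set.mem_insert_of_mem _ (Set.mem_insert_of_mem _ (Set.mem_insert_of_mem _ (Set.mem_insert_of_mem _ (Set.mem_insert_of_mem _ (Set.mem_insert_of_mem _ (Set.mem_insert_of_mem _ (Set.mem_insert_of_mem _ (Set.mem_insert_of_mem _ (Set.mem_insert _ _))))))))))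
  intro a
  have h2 := h a
  simp only [Sentence.Realize, Formula.Realize, BoundedFormula.realize_all,
    BoundedFormula.realize_imp, BoundedFormula.realize_inf, BoundedFormula.realize_sup,
    BoundedFormula.realize_not, BoundedFormula.realize_iff, BoundedFormula.realize_ex,
    BoundedFormula.realize_bdEqual, realize_ltBF, realize_addT, realize_mulT, realize_zeroT,
    realize_oneT, Term.realize_var, Sum.elim_inr, Fin.snoc, Fin.cases] at h2
  simpa [Fin.snoc] using h2

lemma pa_lt_total : ∀ a b : M, (a < b ∨ a = b) ∨ b < a := by
  have h : M ⊨ (∀' ∀' (ltBF &0 &1 ⊔ &0 =' &1 ⊔ ltBF &1 &0) : Lor.Sentence) :=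
    Theory.realize_sentence_of_mem PAminus (Set.mem_insert_of_mem _ (Set.mem_insert_of_mem _ (Set.mem_insert_of_mem _ (Set.mem_insert_of_mem _ (Set.mem_insert_of_mem _ (Set.mem_insert_of_mem _ (Set.mem_insert_of_mem _ (Set.mem_insert_of_mem _ (Set.mem_insert_of_mem _ (Set.mem_insert_of_mem _ (Set.mem_insert _ _)))))))))))
  intro a b
  have h2 := h a b
  simp only [Sentence.Realize, Formula.Realize, BoundedFormula.realize_all,
    BoundedFormula.realize_imp, BoundedFormula.realize_inf, BoundedFormula.realize_sup,
    BoundedFormula.realize_not, BoundedFormula.realize_iff, BoundedFormula.realize_ex,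
    BoundedFormula.realize_bdEqual, realize_ltBF, realize_addT, realize_mulT, realize_zeroT,
    realize_oneT, Term.realize_var, Sum.elim_inr, Fin.snoc, Fin.cases] at h2
  simpa [Fin.snoc] using h2

lemma pa_add_lt_add : ∀ a b c : M, a < b → a + c < b + c := by
  have h : M ⊨ (∀' ∀' ∀' (ltBF &0 &1 ⟹ ltBF (addT &0 &2) (addT &1 &2)) : Lor.Sentence) :=
    Theory.realize_sentence_of_mem PAminus (Set.mem_insert_of_mem _ (Set.mem_insert_of_mem _ (Set.mem_insert_of_mem _ (Set.mem_insert_of_mem _ (Set.mem_insert_of_mem _ (Set.mem_insert_of_mem _ (Set.mem_insert_of_mem _ (Set.mem_insert_of_mem _ (Set.mem_insert_of_mem _ (Set.mem_insert_of_mem _ (Set.mem_insert_of_mem _ (Set.mem_insert _ _))))))))))))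
  intro a b c
  have h2 := h a b c
  simp only [Sentence.Realize, Formula.Realize, BoundedFormula.realize_all,
    BoundedFormula.realize_imp, BoundedFormula.realize_inf, BoundedFormula.realize_sup,
    BoundedFormula.realize_not, BoundedFormula.realize_iff, BoundedFormula.realize_ex,
    BoundedFormula.realize_bdEqual, realize_ltBF, realize_addT, realize_mulT, realize_zeroT,
    realize_oneT, Term.realize_var, Sum.elim_inr, Fin.snoc, Fin.cases] at h2
  simpa [Fin.snoc] using h2

lemma pa_mul_lt_mul : ∀ a b c : M, c ≠ 0 → a < b → a * c < b * c := by
  have h : M ⊨ (∀' ∀' ∀' (∼(&2 =' zeroT) ⊓ ltBF &0 &1 ⟹ ltBF (mulT &0 &2) (mulT &1 &2)) : Lor.Sentence) :=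
    Theory.realize_sentence_of_mem PAminus (Set.mem_insert_of_mem _ (Set.mem_insert_of_mem _ (Set.mem_insert_of_mem _ (Set.mem_insert_of_mem _ (Set.mem_insert_of_mem _ (Set.mem_insert_of_mem _ (Set.mem_insert_of_mem _ (Set.mem_insert_of_mem _ (Set.mem_insert_of_mem _ (Set.mem_insert_of_mem _ (Set.mem_insert_of_mem _ (Set.mem_insert_of_mem _ (Set.mem_insert _ _)))))))))))))
  intro a b c
  have h2 := h a b c
  simp only [Sentence.Realize, Formula.Realize, BoundedFormula.realize_all,
    BoundedFormula.realize_imp, BoundedFormula.realize_inf, BoundedFormula.realize_sup,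
    BoundedFormula.realize_not, BoundedFormula.realize_iff, BoundedFormula.realize_ex,
    BoundedFormula.realize_bdEqual, realize_ltBF, realize_addT, realize_mulT, realize_zeroT,
    realize_oneT, Term.realize_var, Sum.elim_inr, Fin.snoc, Fin.cases] at h2
  simpa [Fin.snoc] using h2

lemma pa_lt_iff : ∀ a b : M, a < b ↔ ∃ z : M, a + z + 1 = b := by
  have h : M ⊨ (∀' ∀' (ltBF &0 &1 ⇔ ∃' (addT (addT &0 &2) oneT =' &1)) : Lor.Sentence) :=
    Theory.realize_sentence_of_mem PAminus (Set.mem_insert_of_mem _ (Set.mem_insert_of_mem _ (Set.mem_insert_of_mem _ (Set.mem_insert_of_mem _ (Set.mem_insert_of_mem _ (Set.mem_insert_of_mem _ (Set.mem_insert_of_mem _ (Set.mem_insert_of_mem _ (Set.mem_insert_of_mem _ (Set.mem_insert_of_mem _ (Set.mem_insert_of_mem _ (Set.mem_insert_of_mem _ (Set.mem_insert_of_mem _ (Set.mem_insert _ _))))))))))))))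
  intro a b
  have h2 := h a b
  simp only [Sentence.Realize, Formula.Realize, BoundedFormula.realize_all,
    BoundedFormula.realize_imp, BoundedFormula.realize_inf, BoundedFormula.realize_sup,
    BoundedFormula.realize_not, BoundedFormula.realize_iff, BoundedFormula.realize_ex,
    BoundedFormula.realize_bdEqual, realize_ltBF, realize_addT, realize_mulT, realize_zeroT,
    realize_oneT, Term.realize_var, Sum.elim_inr, Fin.snoc, Fin.cases] at h2
  simpa [Fin.snoc] using h2

lemma pa_discrete' : (0:M) < 1 ∧ ∀ a : M, 0 < a → 1 < a ∨ (1:M) = a := by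
  have h : M ⊨ (ltBF zeroT oneT ⊓ ∀' (ltBF zeroT &0 ⟹ ltBF oneT &0 ⊔ oneT =' &0) : Lor.Sentence) :=
    Theory.realize_sentence_of_mem PAminus (Set.mem_insert_of_mem _ (Set.mem_insert_of_mem _ (Set.mem_insert_of_mem _ (Set.mem_insert_of_mem _ (Set.mem_insert_of_mem _ (Set.mem_insert_of_mem _ (Set.mem_insert_of_mem _ (Set.mem_insert_of_mem _ (Set.mem_insert_of_mem _ (Set.mem_insert_of_mem _ (Set.mem_insert_of_mem _ (Set.mem_insert_of_mem _ (Set.mem_insert_of_mem _ (Set.mem_insert_of_mem _ (Set.mem_insert _ _)))))))))))))))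
  have h2 := h
  simp only [Sentence.Realize, Formula.Realize, BoundedFormula.realize_all,
    BoundedFormula.realize_imp, BoundedFormula.realize_inf, BoundedFormula.realize_sup,
    BoundedFormula.realize_not, BoundedFormula.realize_iff, BoundedFormula.realize_ex,
    BoundedFormula.realize_bdEqual, realize_ltBF, realize_addT, realize_mulT, realize_zeroT,
    realize_oneT, Term.realize_var, Sum.elim_inr, Fin.snoc, Fin.cases] at h2
  simpa [Fin.snoc] using h2

lemma pa_zero_le' : ∀ a : M, 0 < a ∨ 0 = a := by
  have h : M ⊨ (∀' (ltBF zeroT &0 ⊔ zeroT =' &0) : Lor.Sentence) :=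
    Theory.realize_sentence_of_mem PAminus (Set.mem_insert_of_mem _ (Set.mem_insert_of_mem _ (Set.mem_insert_of_mem _ (Set.mem_insert_of_mem _ (Set.mem_insert_of_mem _ (Set.mem_insert_of_mem _ (Set.mem_insert_of_mem _ (Set.mem_insert_of_mem _ (Set.mem_insert_of_mem _ (Set.mem_insert_of_mem _ (Set.mem_insert_of_mem _ (Set.mem_insert_of_mem _ (Set.mem_insert_of_mem _ (Set.mem_insert_of_mem _ (Set.mem_insert_of_mem _ (Set.mem_singleton _))))))))))))))))
  intro a
  have h2 := h a
  simp only [Sentence.Realize, Formula.Realize, BoundedFormula.realize_all,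
    BoundedFormula.realize_imp, BoundedFormula.realize_inf, BoundedFormula.realize_sup,
    BoundedFormula.realize_not, BoundedFormula.realize_iff, BoundedFormula.realize_ex,
    BoundedFormula.realize_bdEqual, realize_ltBF, realize_addT, realize_mulT, realize_zeroT,
    realize_oneT, Term.realize_var, Sum.elim_inr, Fin.snoc, Fin.cases] at h2
  simpa [Fin.snoc] using h2

end Axioms

section Instances
variable (M : Type) [Lor.Structure M] [PAminus.Model M]

@[reducible] noncomputable instance paCommSemiring : CommSemiring M where
  add := (· + ·)
  zero := 0
  mul := (· * ·)
  one := 1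
  add_assoc := pa_add_assoc M
  add_comm := pa_add_comm M
  add_zero := pa_add_zero M
  zero_add := fun a => by rw [pa_add_comm]; exact pa_add_zero M a
  mul_assoc := pa_mul_assoc M
  mul_comm := pa_mul_comm M
  mul_one := pa_mul_one M
  one_mul := fun a => by rw [pa_mul_comm]; exact pa_mul_one M a
  mul_zero := pa_mul_zero M
  zero_mul := fun a => by rw [pa_mul_comm]; exact pa_mul_zero M a
  left_distrib := pa_left_distrib M
  right_distrib := fun a b c => by
    rw [pa_mul_comm, pa_left_distrib, pa_mul_comm M c a, pa_mul_comm M c b]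
  nsmul := nsmulRec
  npow := npowRec
  natCast := fun k => (k : M)
  natCast_zero := rfl
  natCast_succ := fun n => rfl

lemma pa_ne_of_lt {a b : M} (h : a < b) : a ≠ b := by
  rintro rfl; exact pa_lt_irrefl M a h

@[reducible] noncomputable instance paLinearOrder : LinearOrder M where
  le := (· ≤ ·)
  lt := (· < ·)
  le_refl := fun a => Or.inr rfl
  le_trans := fun a b c hab hbc => by
    rcases hab with h1 | rfl
    · rcases hbc with h2 | rfl
      · exact Or.inl (pa_lt_trans M a b c h1 h2)
      · exact Or.inl h1
    · exact hbc
  le_antisymm := fun a b hab hba => by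
    rcases hab with h1 | rfl
    · rcases hba with h2 | rfl
      · exact absurd (pa_lt_trans M a b a h1 h2) (pa_lt_irrefl M a)
      · rfl
    · rfl
  le_total := fun a b => by
    rcases pa_lt_total M a b with (h | h) | h
    · exact Or.inl (Or.inl h)
    · exact Or.inl (Or.inr h)
    · exact Or.inr (Or.inl h)
  lt_iff_le_not_ge := fun a b => by
    constructor
    · intro h
      refine ⟨Or.inl h, ?_⟩
      rintro (h2 | h2)
      · exact absurd (pa_lt_trans M a b a h h2) (pa_lt_irrefl M a)
      · cases h2; exact pa_lt_irrefl M _ h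
    · rintro ⟨h1 | rfl, h2⟩
      · exact h1
      · exact absurd (Or.inr rfl) h2
  toDecidableLE := Classical.decRel _

noncomputable instance paLOCS : IsStrictOrderedRing M where
  add_le_add_left := fun a b hab c => by
    rcases hab with h | rfl
    · exact Or.inl (by
        have := pa_add_lt_add M a b c h
        exact this)
    · exact Or.inr rfl
  le_of_add_le_add_left := fun a b c h => by
    rcases pa_lt_total M b c with (h1 | rfl) | h1
    · exact Or.inl h1
    · exact Or.inr rfl
    · exfalso
      have h2 : a + c < a + b := by
        have := pa_add_lt_add M c b a h1
        rwa [pa_add_comm M c a, pa_add_comm M b a] at this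
      rcases h with h3 | h3
      · exact pa_lt_irrefl M _ (pa_lt_trans M _ _ _ h3 h2)
      · rw [h3] at h2; exact pa_lt_irrefl M _ h2
  zero_le_one := Or.inl (pa_discrete' M).1
  exists_pair_ne := ⟨0, 1, pa_ne_of_lt M (pa_discrete' M).1⟩
  mul_lt_mul_of_pos_left := fun c hc a b hab => by
    have hc0 : c ≠ 0 := (pa_ne_of_lt M hc).symm
    have := pa_mul_lt_mul M a b c hc0 hab
    rwa [pa_mul_comm M a c, pa_mul_comm M b c] at this
  mul_lt_mul_of_pos_right := fun c hc a b hab =>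
    pa_mul_lt_mul M a b c ((pa_ne_of_lt M hc).symm) hab

variable {M}

lemma pa_zero_le (a : M) : 0 ≤ a := pa_zero_le' M a

lemma pa_add_one_le {a b : M} (h : a < b) : a + 1 ≤ b := by
  obtain ⟨z, rfl⟩ := (pa_lt_iff M a b).1 h
  have : a + 1 ≤ a + 1 + z := le_add_of_nonneg_right (pa_zero_le z)
  calc a + 1 ≤ a + 1 + z := this
    _ = a + z + 1 := by ring

lemma pa_exists_add_of_le {a b : M} (h : a ≤ b) : ∃ c : M, b = a + c := by
  rcases h with h | rfl
  · obtain ⟨z, rfl⟩ := (pa_lt_iff M a b).1 h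
    exact ⟨z + 1, by ring⟩
  · exact ⟨0, by ring⟩

noncomputable instance paExistsAddOfLE : ExistsAddOfLE M :=
  ⟨fun h => pa_exists_add_of_le h⟩

lemma pa_one_le {a : M} (h : 0 < a) : 1 ≤ a := by
  rcases (pa_discrete' M).2 a h with h1 | h1
  · exact le_of_lt h1
  · exact le_of_eq h1

end Instances

section TestI
variable {M : Type} [Lor.Structure M] [PAminus.Model M]
example (a b : M) : a + b + 1 = 1 + b + a := by ring
example (a b : M) (h : a < b) (c : M) (hc : 0 ≤ c) : a + c ≤ b + c := by
  exact add_le_add_left h.le c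
example (k l : ℕ) (h : k ≤ l) : (k : M) ≤ (l : M) := Nat.cast_le.2 h
example (v : Fin 0 ⊕ Fin 1 → M) (t u : Lor.Term (Fin 0 ⊕ Fin 1)) :
    (addT t u).realize v = t.realize v + u.realize v := by simp
example (a b : M) (h : a * a < b) (hb : a * a = b) : False := by
  rw [hb] at h; exact lt_irrefl _ h
end TestI

/-! ### The formula `∃ y, y·y ≤ x < (y+1)·(y+1)` -/

def xvar : Lor.Term ((Fin 0 ⊕ Fin 1) ⊕ Fin 1) := var (Sum.inl (Sum.inr 0))

noncomputable def phi1 : OneVarFormula :=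
  ∃' ((ltBF (mulT &0 &0) xvar ⊔ (mulT &0 &0 =' xvar)) ⊓
      ltBF xvar (mulT (addT &0 oneT) (addT &0 oneT)))

section Phi1
variable {M : Type} [Lor.Structure M]

lemma evalF_phi1 (x : M) :
    evalF phi1 x ↔ ∃ y : M, (y * y < x ∨ y * y = x) ∧ x < (y + 1) * (y + 1) := by
  rw [evalF, phi1, Formula.Realize, BoundedFormula.realize_ex]
  refine exists_congr fun y => ?_
  simp [xvar, Fin.snoc, asg]

variable [PAminus.Model M]

lemma evalF_phi1' (x : M) :
    evalF phi1 x ↔ ∃ y : M, y * y ≤ x ∧ x < (y + 1) * (y + 1) := by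
  rw [evalF_phi1]
  refine exists_congr fun y => and_congr_left fun _ => ?_
  rw [le_iff_lt_or_eq]

lemma phi1_succ {x : M} (h : evalF phi1 x) : evalF phi1 (x + 1) := by
  rw [evalF_phi1'] at h ⊢
  obtain ⟨y, h1, h2⟩ := h
  by_cases hc : x + 1 < (y + 1) * (y + 1)
  · exact ⟨y, le_trans h1 (le_add_of_nonneg_right (pa_zero_le 1)), hc⟩
  · have h3 : (y + 1) * (y + 1) ≤ x + 1 := not_lt.1 hc
    have h4 : x + 1 ≤ (y + 1) * (y + 1) := pa_add_one_le h2
    have he : (y + 1) * (y + 1) = x + 1 := le_antisymm h3 h4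
    refine ⟨y + 1, le_of_eq he, ?_⟩
    rw [← he]
    have hlt : y + 1 < y + 1 + 1 := lt_add_one _
    exact mul_lt_mul'' hlt hlt (pa_zero_le _) (pa_zero_le _)

lemma phi1_cast (k : ℕ) : evalF phi1 ((k : M)) := by
  rw [evalF_phi1']
  refine ⟨(Nat.sqrt k : M), ?_, ?_⟩
  · have := Nat.sqrt_le' k
    rw [Nat.pow_two] at this
    calc ((Nat.sqrt k : M)) * (Nat.sqrt k : M) = ((Nat.sqrt k * Nat.sqrt k : ℕ) : M) := by
          push_cast; ring
      _ ≤ (k : M) := Nat.cast_le.2 this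
  · have := Nat.lt_succ_sqrt' k
    rw [Nat.pow_two, Nat.succ_eq_add_one] at this
    calc (k : M) < ((Nat.sqrt k + 1) * (Nat.sqrt k + 1) : ℕ) := Nat.cast_lt.2 this
      _ = ((Nat.sqrt k : M) + 1) * ((Nat.sqrt k : M) + 1) := by push_cast; ring

lemma phi1_add_cast {x : M} (h : evalF phi1 x) (k : ℕ) : evalF phi1 (x + (k : M)) := by
  induction k with
  | zero => simpa using h
  | succ k ih =>
    have : (x + ((k : M) + 1)) = (x + (k : M)) + 1 := by ring
    have h2 := phi1_succ ih
    rw [Nat.cast_succ, this]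
    exact h2

end Phi1

theorem phi1_stepInductive (n : ℕ) : IsStepInductive n phi1 := by
  intro M v xs
  rw [show xs = default from Subsingleton.elim _ _]
  show Formula.Realize (M := M) _ _
  rw [realize_closeAll0, Formula.realize_inf, realize_conjNum, realize_allX0]
  constructor
  · intro k _
    exact phi1_cast k
  · intro x
    show Formula.Realize (M := M) (phi1 ⟹ substX phi1 (addT xT (numT (n + 1)))) (asg x)
    rw [Formula.realize_imp, realize_substX0, realize_addT, realize_numT, realize_xT]
    intro h
    exact phi1_add_cast h (n + 1)

/-! ### The formula `ψₙ`: residue classes mod `n+2` with an even/odd side condition -/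

noncomputable def exB (m k : ℕ) : OneVarFormula :=
  ∃' (xvar =' addT (mulT (numT m) &0) (numT k))

noncomputable def disjB (m : ℕ) : ℕ → OneVarFormula
  | 0 => exB m 0
  | k + 1 => disjB m k ⊔ exB m (k + 1)

def xvar2 : Lor.Term ((Fin 0 ⊕ Fin 1) ⊕ Fin 2) := var (Sum.inl (Sum.inr 0))

noncomputable def lastB (m k : ℕ) : OneVarFormula :=
  ∃' ∃' ((xvar2 =' addT (mulT (numT m) &0) (numT k)) ⊓
    ((&0 =' mulT twoT &1) ⊔ (&0 =' addT (mulT twoT &1) oneT)))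

noncomputable def psi (n : ℕ) : OneVarFormula := disjB (n + 2) n ⊔ lastB (n + 2) (n + 1)

section Psi
variable {M : Type} [Lor.Structure M]

lemma evalF_exB (m k : ℕ) (x : M) :
    evalF (exB m k) x ↔ ∃ y : M, x = (m : M) * y + (k : M) := by
  rw [evalF, exB, Formula.Realize, BoundedFormula.realize_ex]
  refine exists_congr fun y => ?_
  simp [xvar, Fin.snoc, asg]

lemma evalF_disjB (m j : ℕ) (x : M) :
    evalF (disjB m j) x ↔ ∃ k ≤ j, ∃ y : M, x = (m : M) * y + (k : M) := by
  induction j with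
  | zero =>
    rw [disjB, evalF_exB]
    constructor
    · intro h; exact ⟨0, le_refl 0, h⟩
    · rintro ⟨k, hk, h⟩; rwa [Nat.le_zero.1 hk] at h
  | succ j ih =>
    rw [disjB]
    have : evalF (disjB m j ⊔ exB m (j+1)) x ↔ evalF (disjB m j) x ∨ evalF (exB m (j+1)) x := by
      rw [evalF, evalF, evalF, Formula.Realize, BoundedFormula.realize_sup]; exact Iff.rfl
    rw [this, ih, evalF_exB]
    constructor
    · rintro (⟨k, hk, hy⟩ | hy)
      · exact ⟨k, Nat.le_succ_of_le hk, hy⟩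
      · exact ⟨j + 1, le_refl _, hy⟩
    · rintro ⟨k, hk, hy⟩
      rcases Nat.lt_succ_iff_lt_or_eq.1 (Nat.lt_succ_of_le hk) with h | rfl
      · exact Or.inl ⟨k, Nat.lt_succ_iff.1 h, hy⟩
      · exact Or.inr hy

lemma evalF_lastB (m k : ℕ) (x : M) :
    evalF (lastB m k) x ↔ ∃ y z : M,
      x = (m : M) * y + (k : M) ∧ (y = (1 + 1) * z ∨ y = (1 + 1) * z + 1) := by
  rw [evalF, lastB, Formula.Realize, BoundedFormula.realize_ex]
  refine exists_congr fun y => ?_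
  rw [BoundedFormula.realize_ex]
  refine exists_congr fun z => ?_
  simp [xvar2, Fin.snoc, asg]

lemma evalF_psi (n : ℕ) (x : M) :
    evalF (psi n) x ↔ (∃ k ≤ n, ∃ y : M, x = ((n + 2 : ℕ) : M) * y + (k : M)) ∨
      (∃ y z : M, x = ((n + 2 : ℕ) : M) * y + ((n + 1 : ℕ) : M) ∧
        (y = (1 + 1) * z ∨ y = (1 + 1) * z + 1)) := by
  rw [psi]
  have : evalF (disjB (n+2) n ⊔ lastB (n+2) (n+1)) x ↔
      evalF (disjB (n+2) n) x ∨ evalF (lastB (n+2) (n+1)) x := by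
    rw [evalF, evalF, evalF, Formula.Realize, BoundedFormula.realize_sup]; exact Iff.rfl
  rw [this, evalF_disjB, evalF_lastB]

variable [PAminus.Model M]

/-- Anything of the form `m·y + j` with `j ≤ n+1` and `y` even or odd satisfies `ψₙ`. -/
lemma psi_helper2 (n : ℕ) {j : ℕ} (hj : j ≤ n + 1) {x y z : M}
    (hy : y = (1 + 1) * z ∨ y = (1 + 1) * z + 1)
    (hx : x = ((n + 2 : ℕ) : M) * y + (j : M)) : evalF (psi n) x := by
  rw [evalF_psi]
  rcases Nat.lt_succ_iff_lt_or_eq.1 (Nat.lt_succ_of_le hj) with h | rfl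
  · exact Or.inl ⟨j, Nat.lt_succ_iff.1 h, y, hx⟩
  · exact Or.inr ⟨y, z, hx, hy⟩

lemma psi_helper (n : ℕ) {j : ℕ} (hj : j ≤ 2 * n + 3) {x y z : M}
    (hy : y = (1 + 1) * z ∨ y = (1 + 1) * z + 1)
    (hx : x = ((n + 2 : ℕ) : M) * y + (j : M)) : evalF (psi n) x := by
  rcases le_or_gt j (n + 1) with h | h
  · exact psi_helper2 n h hy hx
  · -- shift the quotient by one
    have hge : n + 2 ≤ j := h
    have hj' : j - (n + 2) ≤ n + 1 := by omega
    have hcast : (j : M) = ((n + 2 : ℕ) : M) + ((j - (n + 2) : ℕ) : M) := by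
      rw [← Nat.cast_add]
      congr 1
      omega
    have hx' : x = ((n + 2 : ℕ) : M) * (y + 1) + ((j - (n + 2) : ℕ) : M) := by
      rw [hx, hcast]; ring
    have hy' : y + 1 = (1 + 1) * (z + 1) ∨ y + 1 = (1 + 1) * z + 1 := by
      rcases hy with h' | h'
      · exact Or.inr (by rw [h'])
      · exact Or.inl (by rw [h']; ring)
    rcases hy' with h' | h'
    · exact psi_helper2 n hj' (Or.inl h') hx'
    · exact psi_helper2 n hj' (Or.inr h') hx'

/-- Every element satisfying `ψₙ` has a representation `m·y + j`, `j ≤ n+1`. -/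
lemma psi_rep {n : ℕ} {x : M} (h : evalF (psi n) x) :
    ∃ (j : ℕ) (y : M), j ≤ n + 1 ∧ x = ((n + 2 : ℕ) : M) * y + (j : M) := by
  rw [evalF_psi] at h
  rcases h with ⟨k, hk, y, hy⟩ | ⟨y, z, hy, _⟩
  · exact ⟨k, y, Nat.le_succ_of_le hk, hy⟩
  · exact ⟨n + 1, y, le_refl _, hy⟩

theorem psi_pInductive (n : ℕ) : IsPInductive (psi n) := by
  intro M v xs
  rw [show xs = default from Subsingleton.elim _ _]
  show Formula.Realize (M := M) _ _
  rw [realize_closeAll0, Formula.realize_inf, realize_substP0, realize_zeroT, realize_allX0]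
  constructor
  · -- ψₙ(0)
    rw [evalF_psi]
    exact Or.inl ⟨0, Nat.zero_le n, 0, by push_cast; ring⟩
  · intro x
    show Formula.Realize (M := M)
      (psi n ⟹ substX (psi n) (mulT twoT xT) ⊓ substX (psi n) (addT (mulT twoT xT) oneT)) (asg x)
    simp only [Formula.realize_imp, Formula.realize_inf, realize_substX0, realize_substX0,
      realize_addT, realize_mulT, realize_twoT, realize_oneT, realize_xT, asg_apply]
    intro h
    obtain ⟨j, y, hj, hx⟩ := psi_rep h
    constructor
    · refine psi_helper n (j := 2 * j) (by omega) (y := (1 + 1) * y) (z := y) (Or.inl rfl) ?_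
      rw [hx]; push_cast; ring
    · refine psi_helper n (j := 2 * j + 1) (by omega) (y := (1 + 1) * y) (z := y) (Or.inl rfl) ?_
      rw [hx]; push_cast; ring

end Psi

/-! ### The model: the nonnegative part of `ℤ[X]` -/

open Polynomial in
def PosP (p : ℤ[X]) : Prop := 0 < p.leadingCoeff

def NonnegP (p : Polynomial ℤ) : Prop := p = 0 ∨ PosP p

def Pmodel : Type := {p : Polynomial ℤ // NonnegP p}

attribute [reducible] Pmodel

namespace PmodelFacts
open Polynomial

lemma posP_add {a b : ℤ[X]} (ha : PosP a) (hb : PosP b) : PosP (a + b) := by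
  rcases lt_trichotomy a.degree b.degree with h | h | h
  · rw [PosP, Polynomial.leadingCoeff_add_of_degree_lt h]; exact hb
  · rw [PosP, Polynomial.leadingCoeff_add_of_degree_eq h (add_pos ha hb).ne']
    exact add_pos ha hb
  · rw [PosP, add_comm, Polynomial.leadingCoeff_add_of_degree_lt h]; exact ha

lemma nonnegP_add {a b : ℤ[X]} (ha : NonnegP a) (hb : NonnegP b) : NonnegP (a + b) := by
  rcases ha with rfl | ha
  · simpa using hb
  · rcases hb with rfl | hb
    · rw [add_zero]; exact Or.inr ha
    · exact Or.inr (posP_add ha hb)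

lemma posP_mul {a b : ℤ[X]} (ha : PosP a) (hb : PosP b) : PosP (a * b) := by
  rw [PosP, Polynomial.leadingCoeff_mul]; exact mul_pos ha hb

lemma nonnegP_mul {a b : ℤ[X]} (ha : NonnegP a) (hb : NonnegP b) : NonnegP (a * b) := by
  rcases ha with rfl | ha
  · simp [NonnegP]
  · rcases hb with rfl | hb
    · simp [NonnegP]
    · exact Or.inr (posP_mul ha hb)

lemma posP_one : PosP (1 : ℤ[X]) := by
  rw [PosP, Polynomial.leadingCoeff_one]; exact zero_lt_one

lemma trichotomyP (a : ℤ[X]) : a = 0 ∨ PosP a ∨ PosP (-a) := by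
  rcases lt_trichotomy 0 a.leadingCoeff with h | h | h
  · exact Or.inr (Or.inl h)
  · exact Or.inl (Polynomial.leadingCoeff_eq_zero.1 h.symm)
  · refine Or.inr (Or.inr ?_)
    rw [PosP, Polynomial.leadingCoeff_neg]
    omega

lemma not_posP_zero : ¬ PosP (0 : ℤ[X]) := by
  rw [PosP, Polynomial.leadingCoeff_zero]; exact lt_irrefl 0

lemma posP_sub_one {a : ℤ[X]} (ha : PosP a) : NonnegP (a - 1) := by
  rcases Nat.eq_zero_or_pos a.natDegree with h | h
  · obtain ⟨c, rfl⟩ := Polynomial.natDegree_eq_zero.1 h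
    rw [PosP, Polynomial.leadingCoeff_C] at ha
    rcases eq_or_lt_of_le (Int.add_one_le_iff.2 ha) with h1 | h1
    · left
      rw [← h1]; simp
    · right
      rw [PosP, ← Polynomial.C_1, ← Polynomial.C_sub, Polynomial.leadingCoeff_C]
      omega
  · right
    have hdeg : (1 : ℤ[X]).degree < a.degree := by
      rw [Polynomial.degree_one]
      exact lt_of_lt_of_le (by exact_mod_cast h)
        (le_of_eq (Polynomial.degree_eq_natDegree (fun h0 => by simp [h0] at h)).symm)
    rw [PosP, sub_eq_add_neg, add_comm, Polynomial.leadingCoeff_add_of_degree_lt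
      (by rwa [Polynomial.degree_neg])]
    exact ha

end PmodelFacts

open PmodelFacts in
noncomputable instance PmodelStructure : Lor.Structure Pmodel where
  funMap {n} f := match f with
    | LorFunc.zero => fun _ => ⟨0, Or.inl rfl⟩
    | LorFunc.one => fun _ => ⟨1, Or.inr posP_one⟩
    | LorFunc.add => fun v => ⟨(v 0).1 + (v 1).1, nonnegP_add (v 0).2 (v 1).2⟩
    | LorFunc.mul => fun v => ⟨(v 0).1 * (v 1).1, nonnegP_mul (v 0).2 (v 1).2⟩
  RelMap {n} r := match r with
    | LorRel.lt => fun v => PosP ((v 1).1 - (v 0).1)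

namespace PmodelFacts
open Polynomial

@[simp] lemma val_zero : (0 : Pmodel).1 = 0 := rfl
@[simp] lemma val_one : (1 : Pmodel).1 = 1 := rfl
@[simp] lemma val_add (a b : Pmodel) : (a + b).1 = a.1 + b.1 := rfl
@[simp] lemma val_mul (a b : Pmodel) : (a * b).1 = a.1 * b.1 := rfl
lemma lt_def (a b : Pmodel) : a < b ↔ PosP (b.1 - a.1) := Iff.rfl

lemma ext' {a b : Pmodel} (h : a.1 = b.1) : a = b := Subtype.ext h

end PmodelFacts

section SnocLemmas
variable {α : Type*} (a b c : α)
@[simp] lemma snoc1_0 : (Fin.snoc default a : Fin 1 → α) 0 = a := rfl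
@[simp] lemma snoc2_0 : (Fin.snoc (Fin.snoc default a) b : Fin 2 → α) 0 = a := rfl
@[simp] lemma snoc2_1 : (Fin.snoc (Fin.snoc default a) b : Fin 2 → α) 1 = b := rfl
@[simp] lemma snoc3_0 : (Fin.snoc (Fin.snoc (Fin.snoc default a) b) c : Fin 3 → α) 0 = a := rfl
@[simp] lemma snoc3_1 : (Fin.snoc (Fin.snoc (Fin.snoc default a) b) c : Fin 3 → α) 1 = b := rfl
@[simp] lemma snoc3_2 : (Fin.snoc (Fin.snoc (Fin.snoc default a) b) c : Fin 3 → α) 2 = c := rfl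
end SnocLemmas

open PmodelFacts Polynomial in
noncomputable instance PmodelModel : Pmodel ⊨ PAminus := by
  refine ⟨fun {σ} hσ => ?_⟩
  simp only [PAminus, Set.mem_insert_iff, Set.mem_singleton_iff] at hσ
  rcases hσ with rfl|rfl|rfl|rfl|rfl|rfl|rfl|rfl|rfl|rfl|rfl|rfl|rfl|rfl|rfl|rfl <;>
    simp only [Sentence.Realize, Formula.Realize, BoundedFormula.realize_all,
      BoundedFormula.realize_imp, BoundedFormula.realize_inf, BoundedFormula.realize_sup,
      BoundedFormula.realize_not, BoundedFormula.realize_iff, BoundedFormula.realize_ex,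
      BoundedFormula.realize_bdEqual, realize_ltBF, realize_addT, realize_mulT, realize_zeroT,
      realize_oneT, Term.realize_var, Function.comp_apply, Sum.elim_inr,
      snoc1_0, snoc2_0, snoc2_1, snoc3_0, snoc3_1, snoc3_2]
  · intro a b c
    exact ext' (by simp only [val_add]; ring)
  · intro a b
    exact ext' (by simp only [val_add]; ring)
  · intro a b c
    exact ext' (by simp only [val_mul]; ring)
  · intro a b
    exact ext' (by simp only [val_mul]; ring)
  · intro a b c
    exact ext' (by simp only [val_add, val_mul]; ring)
  · intro a
    exact ext' (by simp only [val_add, val_zero]; ring)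
  · intro a
    exact ext' (by simp only [val_mul, val_zero]; ring)
  · intro a
    exact ext' (by simp only [val_mul, val_one]; ring)
  -- (P9) lt trans
  · rintro a b c ⟨h1, h2⟩
    rw [lt_def] at h1 h2 ⊢
    have := posP_add h1 h2
    rwa [show b.1 - a.1 + (c.1 - b.1) = c.1 - a.1 by ring] at this
  -- (P10) irrefl
  · intro a
    rw [lt_def, sub_self]
    exact not_posP_zero
  -- (P11) total
  · intro a b
    rcases trichotomyP (b.1 - a.1) with h | h | h
    · exact Or.inl (Or.inr (ext' (sub_eq_zero.1 h).symm))
    · exact Or.inl (Or.inl h)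
    · refine Or.inr ?_
      rw [lt_def, show a.1 - b.1 = -(b.1 - a.1) by ring]
      exact h
  -- (P12) add strict mono
  · intro a b c h1
    rw [lt_def] at h1 ⊢
    rwa [val_add, val_add, show b.1 + c.1 - (a.1 + c.1) = b.1 - a.1 by ring]
  -- (P13) mul strict mono
  · rintro a b c ⟨hc, h1⟩
    rw [lt_def] at h1 ⊢
    have hc1 : PosP c.1 := by
      rcases c.2 with h0 | h0
      · exact absurd (ext' h0) hc
      · exact h0
    have h2 := posP_mul h1 hc1
    rw [val_mul, val_mul]
    rwa [show (b.1 - a.1) * c.1 = b.1 * c.1 - a.1 * c.1 by ring] at h2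
  -- (P14) subtraction witnesses
  · intro a b
    constructor
    · intro h
      rw [lt_def] at h
      refine ⟨⟨b.1 - a.1 - 1, posP_sub_one h⟩, ?_⟩
      exact ext' (by simp only [val_add, val_one]; ring)
    · rintro ⟨z, hz⟩
      rw [lt_def]
      have hval : a.1 + z.1 + 1 = b.1 := by
        rw [← hz]; simp only [val_add, val_one]
      rw [← hval, show a.1 + z.1 + 1 - a.1 = z.1 + 1 by ring]
      rcases z.2 with h0 | h0
      · rw [h0, zero_add]; exact posP_one
      · exact posP_add h0 posP_one
  -- (P15) discreteness
  · constructor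
    · rw [lt_def, val_zero, val_one, sub_zero]
      exact posP_one
    · intro a h
      rw [lt_def, val_zero, sub_zero] at h
      rcases posP_sub_one h with h0 | h0
      · exact Or.inr (ext' (by rw [val_one, (sub_eq_zero.1 h0).symm]))
      · refine Or.inl ?_
        rw [lt_def, val_one]
        exact h0
  -- (P16) nonneg
  · intro a
    rcases a.2 with h | h
    · exact Or.inr (ext' (by rw [val_zero, h]))
    · refine Or.inl ?_
      rw [lt_def, val_zero, sub_zero]
      exact h

/-! ### Refutation of p-inductivity of `phi1` in `Pmodel` -/

namespace PmodelFacts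
open Polynomial

instance : Nonempty Pmodel := ⟨⟨0, Or.inl rfl⟩⟩

lemma not_posP_of_coeff_neg {v : ℤ[X]} {k : ℕ} (hdeg : v.natDegree ≤ k)
    (hc : v.coeff k < 0) : ¬ PosP v := by
  intro hv
  have h1 : k ≤ v.natDegree := le_natDegree_of_ne_zero hc.ne
  have h2 : v.natDegree = k := le_antisymm hdeg h1
  rw [PosP, Polynomial.leadingCoeff, h2] at hv
  omega

lemma not_nonnegP_of_coeff_neg {v : ℤ[X]} {k : ℕ} (hdeg : v.natDegree ≤ k)
    (hc : v.coeff k < 0) : ¬ NonnegP v := by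
  rintro (rfl | hv)
  · simp at hc
  · exact not_posP_of_coeff_neg hdeg hc hv

lemma posP_X : PosP (X : ℤ[X]) := by
  rw [PosP, Polynomial.leadingCoeff_X]; exact zero_lt_one

lemma posP_X_sq : PosP (X ^ 2 : ℤ[X]) := by
  rw [PosP, Polynomial.leadingCoeff_X_pow]; exact zero_lt_one

/-- The element `X` of the model. -/
noncomputable def Xe : Pmodel := ⟨X, Or.inr posP_X⟩
/-- The element `X²` of the model. -/
noncomputable def Xsq : Pmodel := ⟨X ^ 2, Or.inr posP_X_sq⟩

lemma posP_linear (a b : ℤ) (ha : 0 < a) : PosP (C a * X + C b) := by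
  rw [PosP, Polynomial.leadingCoeff_linear ha.ne']
  exact ha

/-- `X²` has a square-root floor. -/
lemma evalF_phi1_Xsq : evalF phi1 (Xsq : Pmodel) := by
  rw [evalF_phi1]
  refine ⟨Xe, Or.inr (ext' (by simp [Xe, Xsq]; ring)), ?_⟩
  rw [lt_def]
  have hval : ((Xe + 1) * (Xe + 1)).1 - Xsq.1 = C 2 * X + C 1 := by
    simp only [val_mul, val_add, val_one, Xe, Xsq]
    simp only [map_ofNat, map_one]
    ring
  rw [hval]
  exact posP_linear 2 1 (by norm_num)

/-- The key fact: no element `q` satisfies `q² ≤ 2X² < (q+1)²`. -/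
lemma no_sqrt_2Xsq (p : ℤ[X]) (hp : NonnegP p) (h1 : NonnegP (2 * X ^ 2 - p * p))
    (h2 : PosP ((p + 1) * (p + 1) - 2 * X ^ 2)) : False := by
  have hc2 : ∀ k : ℕ, (2 * X ^ 2 : ℤ[X]).coeff k = if k = 2 then 2 else 0 := by
    intro k
    rw [show (2 * X ^ 2 : ℤ[X]) = C 2 * X ^ 2 by simp only [map_ofNat],
      Polynomial.coeff_C_mul, Polynomial.coeff_X_pow]
    split <;> simp_all
  have hdeg2 : (2 * X ^ 2 : ℤ[X]).natDegree ≤ 2 := by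
    rw [show (2 * X ^ 2 : ℤ[X]) = C 2 * X ^ 2 by simp only [map_ofNat],
      Polynomial.natDegree_C_mul (by norm_num : (2:ℤ) ≠ 0), Polynomial.natDegree_X_pow]
  rcases eq_or_ne p 0 with rfl | hp0
  · -- p = 0 : (0+1)² - 2X² has negative top coefficient
    refine not_posP_of_coeff_neg (v := (0 + 1) * (0 + 1) - 2 * X ^ 2) (k := 2) ?_ ?_ h2
    · refine le_trans (Polynomial.natDegree_sub_le _ _) ?_
      simp [hdeg2]
    · rw [Polynomial.coeff_sub, hc2]
      norm_num [Polynomial.coeff_one]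
  · have hpp : PosP p := hp.resolve_left hp0
    set d := p.natDegree with hd
    set a := p.leadingCoeff with ha
    have ha0 : 0 < a := hpp
    have hppcoeff : (p * p).coeff (d + d) = a * a := by
      rw [ha, hd]; exact Polynomial.coeff_mul_degree_add_degree p p
    have hppdeg : (p * p).natDegree ≤ d + d := Polynomial.natDegree_mul_le
    rcases lt_or_ge d 2 with hdlt | hdge
    · rcases (by omega : d = 0 ∨ d = 1) with hd0 | hd1
      · -- constant p : (p+1)² is constant, cannot exceed 2X²
        obtain ⟨c, hc⟩ := Polynomial.natDegree_eq_zero.1 (by rw [← hd]; exact hd0)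
        refine not_posP_of_coeff_neg (v := (p + 1) * (p + 1) - 2 * X ^ 2) (k := 2) ?_ ?_ h2
        · refine le_trans (Polynomial.natDegree_sub_le _ _) ?_
          have : ((p + 1) * (p + 1)).natDegree = 0 := by
            rw [← hc, ← Polynomial.C_1, ← Polynomial.C_add, ← Polynomial.C_mul]
            exact Polynomial.natDegree_C _
          simp [this, hdeg2]
        · rw [Polynomial.coeff_sub, hc2]
          have : ((p + 1) * (p + 1)).coeff 2 = 0 := by
            rw [← hc, ← Polynomial.C_1, ← Polynomial.C_add, ← Polynomial.C_mul,
              Polynomial.coeff_C]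
            norm_num
          rw [this]
          norm_num
      · -- d = 1
        rcases lt_or_ge a 2 with ha2 | ha2
        · -- a = 1 : (p+1)² has top coefficient 1 < 2
          have ha1 : a = 1 := by omega
          have hq : (p + 1).natDegree = 1 := by
            rw [show (1 : ℤ[X]) = C 1 from (Polynomial.C_1).symm, Polynomial.natDegree_add_C,
              ← hd]
            exact hd1
          have hqlc : (p + 1).leadingCoeff = 1 := by
            rw [Polynomial.leadingCoeff, hq, Polynomial.coeff_add,
              show (1 : ℤ[X]) = C 1 from (Polynomial.C_1).symm, Polynomial.coeff_C]
            have hco : p.coeff 1 = a := by rw [ha, Polynomial.leadingCoeff, ← hd, hd1]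
            simp [hco, ha1]
          refine not_posP_of_coeff_neg (v := (p + 1) * (p + 1) - 2 * X ^ 2) (k := 2) ?_ ?_ h2
          · refine le_trans (Polynomial.natDegree_sub_le _ _) ?_
            have := Polynomial.natDegree_mul_le (p := p + 1) (q := p + 1)
            rw [hq] at this
            simp only [max_le_iff]
            exact ⟨this, hdeg2⟩
          · rw [Polynomial.coeff_sub, hc2]
            have : ((p + 1) * (p + 1)).coeff 2 = 1 := by
              have := Polynomial.coeff_mul_degree_add_degree (p + 1) (p + 1)
              rw [hq, hqlc] at this
              simpa using this
            rw [this]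
            norm_num
        · -- a ≥ 2 : p² has top coefficient a² > 2
          refine not_nonnegP_of_coeff_neg (v := 2 * X ^ 2 - p * p) (k := 2) ?_ ?_ h1
          · refine le_trans (Polynomial.natDegree_sub_le _ _) ?_
            simp only [max_le_iff]
            exact ⟨hdeg2, by omega⟩
          · rw [Polynomial.coeff_sub, hc2]
            have h22 : (p * p).coeff 2 = a * a := by
              have := hppcoeff
              rwa [hd1] at this
            rw [h22, if_pos rfl]
            nlinarith
    · -- d ≥ 2 : p² has degree > 2
      refine not_nonnegP_of_coeff_neg (v := 2 * X ^ 2 - p * p) (k := d + d) ?_ ?_ h1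
      · refine le_trans (Polynomial.natDegree_sub_le _ _) ?_
        simp only [max_le_iff]
        exact ⟨le_trans hdeg2 (by omega), hppdeg⟩
      · rw [Polynomial.coeff_sub, hc2, hppcoeff]
        have : ¬ (d + d = 2) := by omega
        rw [if_neg this]
        nlinarith

theorem phi1_not_pInductive : ¬ IsPInductive phi1 := by
  intro h
  have hs : Pmodel ⊨ closeAll (substP phi1 zeroT ⊓
      allX (phi1 ⟹ substX phi1 (mulT twoT xT) ⊓ substX phi1 (addT (mulT twoT xT) oneT))) :=
    h.realize_sentence Pmodel
  rw [Sentence.Realize, realize_closeAll0, Formula.realize_inf, realize_allX0] at hs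
  have h2 := hs.2 Xsq
  rw [evalF] at h2
  simp only [Formula.realize_imp, Formula.realize_inf, realize_substX0, realize_mulT,
    realize_addT, realize_twoT, realize_oneT, realize_xT, asg_apply] at h2
  obtain ⟨hdbl, -⟩ := h2 evalF_phi1_Xsq
  rw [evalF_phi1] at hdbl
  obtain ⟨q, hq1, hq2⟩ := hdbl
  have hval : ((1 + 1 : Pmodel) * Xsq).1 = 2 * X ^ 2 := by
    simp only [val_mul, val_add, val_one, Xsq]
    ring
  refine no_sqrt_2Xsq q.1 q.2 ?_ ?_
  · rcases hq1 with hlt | heq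
    · rw [lt_def, hval] at hlt
      exact Or.inr (by rwa [val_mul] at hlt)
    · left
      have := congrArg Subtype.val heq
      rw [val_mul, hval] at this
      rw [this, sub_self]
  · rw [lt_def, hval] at hq2
    rwa [val_mul, val_add, val_one] at hq2

end PmodelFacts

/-! ### Refutation of (n+1)-inductivity of `psi n` in `Pmodel` -/

namespace PmodelFacts
open Polynomial

@[simp] lemma val_natCast (j : ℕ) : ((j : Pmodel)).1 = (j : ℤ[X]) := by
  induction j with
  | zero => simp
  | succ j ih =>
    show ((j : Pmodel) + 1).1 = _
    rw [val_add, ih, val_one]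
    push_cast
    ring

lemma coeff_natCastP (j k : ℕ) : ((j : ℕ) : ℤ[X]).coeff k = if k = 0 then (j : ℤ) else 0 := by
  rw [← Polynomial.C_eq_natCast, Polynomial.coeff_C]

lemma posP_natCast (j : ℕ) (hj : 0 < j) : PosP ((j : ℕ) : ℤ[X]) := by
  rw [PosP, ← Polynomial.C_eq_natCast, Polynomial.leadingCoeff_C]
  exact_mod_cast hj

/-- The element `(n+2)·X` of the model. -/
noncomputable def mXe (n : ℕ) : Pmodel :=
  ⟨((n + 2 : ℕ) : ℤ[X]) * X, Or.inr (posP_mul (posP_natCast (n+2) (by omega)) posP_X)⟩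

theorem psi_not_kInductive (n : ℕ) : ¬ IsKInductive n (psi n) := by
  intro h
  have hs : Pmodel ⊨ closeAll (conjNum (psi n) (n + 1) ⊓
      allX (conjShift (psi n) (n + 1) ⟹ substX (psi n) (addT xT (numT (n + 1))))) :=
    h.realize_sentence Pmodel
  rw [Sentence.Realize, realize_closeAll0, Formula.realize_inf, realize_allX0] at hs
  have h2 := hs.2 (mXe n)
  rw [evalF] at h2
  simp only [Formula.realize_imp, realize_substX0, realize_addT, realize_numT,
    realize_xT, asg_apply] at h2
  -- the shift hypothesis holds
  have hshift : (conjShift (psi n) (n + 1)).Realize (asg (mXe n)) := by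
    rw [realize_conjShift]
    intro k hk
    rw [asg_apply, evalF_psi]
    refine Or.inl ⟨k, by omega, Xe, ?_⟩
    refine ext' ?_
    simp only [val_add, val_mul, val_natCast, mXe, Xe]
  have hbad := h2 hshift
  -- but the conclusion fails
  rw [evalF_psi] at hbad
  rcases hbad with ⟨k, hk, y, hy⟩ | ⟨y, z, hy, hpar⟩
  · -- residue branch: impossible mod n+2
    have hval := congrArg Subtype.val hy
    simp only [val_add, val_mul, val_natCast, mXe] at hval
    have hco := congrArg (fun q => Polynomial.coeff q 0) hval
    simp only [Polynomial.coeff_add, ← Polynomial.C_eq_natCast, Polynomial.coeff_C_mul,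
      Polynomial.coeff_X_zero, Polynomial.coeff_C, if_pos rfl, mul_zero] at hco
    -- hco : 0 + (n+1) = (n+2) * y₀ + k in ℤ
    set y0 : ℤ := y.1.coeff 0 with hy0
    have hkn : (k : ℤ) ≤ (n : ℤ) := by exact_mod_cast hk
    have hk0 : (0 : ℤ) ≤ (k : ℤ) := Int.natCast_nonneg k
    push_cast at hco
    simp only [zero_add] at hco
    rcases le_or_gt y0 0 with h' | h'
    · have hmul : ((n : ℤ) + 2) * y0 ≤ 0 :=
        mul_nonpos_iff.2 (Or.inl ⟨by positivity, h'⟩)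
      linarith
    · have hmul : ((n : ℤ) + 2) ≤ ((n : ℤ) + 2) * y0 :=
        le_mul_of_one_le_right (by positivity) h'
      linarith
  · -- even/odd branch: y must be X, which is neither even nor odd
    have hval := congrArg Subtype.val hy
    simp only [val_add, val_mul, val_natCast, mXe] at hval
    have hcancel : ((n + 2 : ℕ) : ℤ[X]) * X = ((n + 2 : ℕ) : ℤ[X]) * y.1 :=
      add_right_cancel hval
    have hyX : y.1 = X := by
      have hne : ((n + 2 : ℕ) : ℤ[X]) ≠ 0 := Nat.cast_ne_zero.2 (by omega)
      exact (mul_left_cancel₀ hne hcancel).symm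
    have h11 : ((1 : Pmodel) + 1).1 = C 2 := by
      rw [val_add, val_one, map_ofNat]
      norm_num
    rcases hpar with hp | hp
    · have hv := congrArg Subtype.val hp
      rw [hyX, val_mul, h11] at hv
      have hco := congrArg (fun q => Polynomial.coeff q 1) hv
      simp only [Polynomial.coeff_C_mul, Polynomial.coeff_X_one] at hco
      omega
    · have hv := congrArg Subtype.val hp
      rw [hyX, val_add, val_mul, val_one, h11] at hv
      have hco := congrArg (fun q => Polynomial.coeff q 1) hv
      simp only [Polynomial.coeff_add, Polynomial.coeff_C_mul, Polynomial.coeff_X_one,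
        Polynomial.coeff_one, if_neg (one_ne_zero : (1:ℕ) ≠ 0)] at hco
      omega

end PmodelFacts

/-- (1) There is a formula that is `(n+1)`-step inductive for every `n ∈ ℕ` but is not
p-inductive. (2) For every `n ∈ ℕ`, there is a p-inductive formula that is not
`(n+1)`-inductive. -/
theorem stmt17 :
    (∃ φ : OneVarFormula, (∀ n : ℕ, IsStepInductive n φ) ∧ ¬IsPInductive φ) ∧
      (∀ n : ℕ, ∃ φ : OneVarFormula, IsPInductive φ ∧ ¬IsKInductive n φ) :=
  ⟨⟨phi1, phi1_stepInductive, PmodelFacts.phi1_not_pInductive⟩,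
    fun n => ⟨psi n, psi_pInductive n, PmodelFacts.psi_not_kInductive n⟩⟩
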